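/- Let ρ be a bipartite quasi-state on ℂ^{d_A}⊗ℂ^{d_B} and σ a bipartite quasi-state on ℂ^{d_{A'}}⊗ℂ^{d_{B'}}. Then there exists a PPTq operation N with N(ρ) = σ if and only if E_N(ρ) ≥ E_N(σ), where E_N denotes the logarithmic negativity. -/

import Mathlib

open scoped BigOperators ComplexOrder

noncomputable section

/-- Bipartite matrices on `ℂ^{IA} ⊗ ℂ^{IB}`, indexed by pairs. -/
abbrev BMat (IA IB : Type) : Type := Matrix (IA × IB) (IA × IB) ℂ

/-- Partial transpose on the `B` system: `(X^{T_B})_{(i,j),(k,l)} = X_{(i,l),(k,j)}`. -/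
def ptB {IA IB : Type} (X : BMat IA IB) : BMat IA IB :=
  fun p q => X (p.1, q.2) (q.1, p.2)

/-- Trace norm `‖X‖₁ = tr √(X† X)`. -/
noncomputable def traceNorm {n : Type} [Fintype n] [DecidableEq n]
    (X : Matrix n n ℂ) : ℝ :=
  (((Matrix.posSemidef_conjTranspose_mul_self X).1.eigenvectorUnitary : Matrix n n ℂ) *
      Matrix.diagonal (fun i => (((Matrix.posSemidef_conjTranspose_mul_self X).1.eigenvalues i).sqrt : ℂ)) *
      (star (Matrix.posSemidef_conjTranspose_mul_self X).1.eigenvectorUnitary : Matrix n n ℂ)).trace.re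

/-- Operator norm (largest singular value). -/
noncomputable def opNorm {n : Type} [Fintype n] [DecidableEq n] (X : Matrix n n ℂ) : ℝ :=
  ‖Matrix.toEuclideanCLM (𝕜 := ℂ) X‖

/-- Logarithmic negativity `E_N(X) = log₂ ‖X^{T_B}‖₁`. -/
noncomputable def EN {IA IB : Type} [Fintype IA] [Fintype IB] [DecidableEq IA] [DecidableEq IB]
    (X : BMat IA IB) : ℝ :=
  Real.logb 2 (traceNorm (ptB X))

/-- The extension `id_k ⊗ f` of a map on matrices, acting blockwise. -/
def extMap {I J : Type} (f : Matrix I I ℂ → Matrix J J ℂ) (k : ℕ)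
    (M : Matrix (Fin k × I) (Fin k × I) ℂ) : Matrix (Fin k × J) (Fin k × J) ℂ :=
  fun p q => f (fun i i' => M (p.1, i) (q.1, i')) p.2 q.2

/-- A map on matrices is completely positive if all its extensions `id_k ⊗ f`
map positive semidefinite matrices to positive semidefinite matrices. -/
def CompletelyPositive {I J : Type} [Fintype I] [Fintype J]
    (f : Matrix I I ℂ → Matrix J J ℂ) : Prop :=
  ∀ (k : ℕ) (M : Matrix (Fin k × I) (Fin k × I) ℂ), M.PosSemidef → (extMap f k M).PosSemidef

/-- A PPTq operation: a Hermitian-preserving, trace-preserving linear map `N`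
such that `T_{B'} ∘ N ∘ T_B` is completely positive. -/
def IsPPTq {IA IB JA JB : Type} [Fintype IA] [Fintype IB] [Fintype JA] [Fintype JB]
    (N : BMat IA IB →ₗ[ℂ] BMat JA JB) : Prop :=
  (∀ X : BMat IA IB, X.IsHermitian → (N X).IsHermitian) ∧
  (∀ X : BMat IA IB, (N X).trace = X.trace) ∧
  CompletelyPositive (fun X => ptB (N (ptB X)))

/-- A bipartite quasi-state: Hermitian with trace one. -/
def IsQuasiState {IA IB : Type} [Fintype IA] [Fintype IB] (ρ : BMat IA IB) : Prop :=
  ρ.IsHermitian ∧ ρ.trace = 1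

/-- A bipartite quantum state: positive semidefinite with trace one. -/
def IsState {IA IB : Type} [Fintype IA] [Fintype IB] (ρ : BMat IA IB) : Prop :=
  ρ.PosSemidef ∧ ρ.trace = 1

/-- The maximally entangled state `Φ^d = (1/d) ∑_{i,j} |ii⟩⟨jj|`. -/
noncomputable def MES (d : ℕ) : BMat (Fin d) (Fin d) :=
  fun p q => if p.1 = p.2 ∧ q.1 = q.2 then (1 : ℂ) / d else 0

/-- `n`-fold tensor (Kronecker) power, with all `A` factors grouped against all `B` factors. -/
def tensorPow {IA IB : Type} (ρ : BMat IA IB) (n : ℕ) :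
    BMat (Fin n → IA) (Fin n → IB) :=
  fun p q => ∏ i : Fin n, ρ (p.1 i, p.2 i) (q.1 i, q.2 i)

/-- Tensor (Kronecker) product of two bipartite matrices, grouping `A` systems together
and `B` systems together. -/
def tensorMul {IA IB JA JB : Type} (ρ : BMat IA IB) (σ : BMat JA JB) :
    BMat (IA × JA) (IB × JB) :=
  fun p q => ρ (p.1.1, p.2.1) (q.1.1, q.2.1) * σ (p.1.2, p.2.2) (q.1.2, q.2.2)

/-- One-shot exact distillable entanglement under PPTq operations. -/
noncomputable def oneShotDistill {IA IB : Type} [Fintype IA] [Fintype IB]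
    (ρ : BMat IA IB) : ℝ :=
  sSup { x : ℝ | ∃ d : ℕ, 0 < d ∧ x = Real.logb 2 d ∧
    ∃ Λ : BMat IA IB →ₗ[ℂ] BMat (Fin d) (Fin d), IsPPTq Λ ∧ Λ ρ = MES d }

/-- One-shot exact entanglement cost under PPTq operations. -/
noncomputable def oneShotCost {IA IB : Type} [Fintype IA] [Fintype IB]
    (ρ : BMat IA IB) : ℝ :=
  sInf { x : ℝ | ∃ d : ℕ, 0 < d ∧ x = Real.logb 2 d ∧
    ∃ Λ : BMat (Fin d) (Fin d) →ₗ[ℂ] BMat IA IB, IsPPTq Λ ∧ Λ (MES d) = ρ }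

/-- The one-shot distillation error for `n` copies towards `Φ^d`, optimized over PPTq operations. -/
noncomputable def distillErr {IA IB : Type} [Fintype IA] [Fintype IB]
    [DecidableEq IA] [DecidableEq IB] (ρ : BMat IA IB) (n d : ℕ) : ℝ :=
  sInf { e : ℝ | ∃ Λ : BMat (Fin n → IA) (Fin n → IB) →ₗ[ℂ] BMat (Fin d) (Fin d),
    IsPPTq Λ ∧ e = traceNorm (Λ (tensorPow ρ n) - MES d) }

/-- The one-shot dilution error for preparing `n` copies from `Φ^d`, optimized over PPTq operations. -/
noncomputable def costErr {IA IB : Type} [Fintype IA] [Fintype IB]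
    [DecidableEq IA] [DecidableEq IB] (ρ : BMat IA IB) (n d : ℕ) : ℝ :=
  sInf { e : ℝ | ∃ Λ : BMat (Fin d) (Fin d) →ₗ[ℂ] BMat (Fin n → IA) (Fin n → IB),
    IsPPTq Λ ∧ e = traceNorm (tensorPow ρ n - Λ (MES d)) }

/-- Distillable entanglement under PPTq operations (asymptotically vanishing error). -/
noncomputable def EDppt {IA IB : Type} [Fintype IA] [Fintype IB]
    [DecidableEq IA] [DecidableEq IB] (ρ : BMat IA IB) : ℝ :=
  sSup { r : ℝ | Filter.Tendsto (fun n : ℕ => distillErr ρ n (2 ^ ⌊r * n⌋₊))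
    Filter.atTop (nhds 0) }

/-- Entanglement cost under PPTq operations (asymptotically vanishing error). -/
noncomputable def ECppt {IA IB : Type} [Fintype IA] [Fintype IB]
    [DecidableEq IA] [DecidableEq IB] (ρ : BMat IA IB) : ℝ :=
  sInf { r : ℝ | Filter.Tendsto (fun n : ℕ => costErr ρ n (2 ^ ⌈r * n⌉₊))
    Filter.atTop (nhds 0) }

/-- Tempered negativity `N_τ(σ | ρ)`. -/
noncomputable def temperedNeg {IA IB : Type} [Fintype IA] [Fintype IB]
    [DecidableEq IA] [DecidableEq IB] (σ ρ : BMat IA IB) : ℝ :=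
  sSup { t : ℝ | ∃ X : Matrix (IA × IB) (IA × IB) ℂ, X.IsHermitian ∧
    opNorm (ptB X) ≤ 1 ∧ (X * ρ).trace = (opNorm X : ℂ) ∧ (X * σ).trace = (t : ℂ) }

/-- Asymptotic exact conversion rate under PPTq operations. -/
noncomputable def convRate {IA IB JA JB : Type} [Fintype IA] [Fintype IB]
    [Fintype JA] [Fintype JB]
    (ρ : BMat IA IB) (σ : BMat JA JB) : ℝ :=
  sSup { r : ℝ | 0 ≤ r ∧ ∀ᶠ n : ℕ in Filter.atTop,
    ∃ Λ : BMat (Fin n → IA) (Fin n → IB) →ₗ[ℂ]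
          BMat (Fin ⌊r * n⌋₊ → JA) (Fin ⌊r * n⌋₊ → JB),
      IsPPTq Λ ∧ Λ (tensorPow ρ n) = tensorPow σ ⌊r * n⌋₊ }

section ProofAux

open Matrix

variable {n : Type} [Fintype n] [DecidableEq n]

/-- Functional calculus for a Hermitian matrix via its spectral decomposition. -/
noncomputable def fc {A : Matrix n n ℂ} (hA : A.IsHermitian) (f : ℝ → ℝ) : Matrix n n ℂ :=
  (hA.eigenvectorUnitary : Matrix n n ℂ) *
    Matrix.diagonal (fun i => ((f (hA.eigenvalues i) : ℝ) : ℂ)) *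
    (hA.eigenvectorUnitary : Matrix n n ℂ)ᴴ

variable {A : Matrix n n ℂ} (hA : A.IsHermitian)

lemma star_ofReal' (r : ℝ) : star ((r : ℝ) : ℂ) = ((r : ℝ) : ℂ) := by
  rw [congrFun Complex.star_def _, Complex.conj_ofReal]

lemma fc_mul (f g : ℝ → ℝ) :
    fc hA f * fc hA g = fc hA (fun x => f x * g x) := by
  unfold fc
  set U := (hA.eigenvectorUnitary : Matrix n n ℂ) with hU
  have h1 : Uᴴ * U = 1 := by
    rw [← Matrix.star_eq_conjTranspose]
    exact Matrix.mem_unitaryGroup_iff'.mp hA.eigenvectorUnitary.2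
  have key : ∀ d e : n → ℂ, (U * Matrix.diagonal d * Uᴴ) * (U * Matrix.diagonal e * Uᴴ)
      = U * Matrix.diagonal (fun i => d i * e i) * Uᴴ := by
    intro d e
    calc (U * Matrix.diagonal d * Uᴴ) * (U * Matrix.diagonal e * Uᴴ)
        = U * Matrix.diagonal d * ((Uᴴ * U) * (Matrix.diagonal e * Uᴴ)) := by
          simp only [Matrix.mul_assoc]
      _ = U * (Matrix.diagonal d * Matrix.diagonal e) * Uᴴ := by
          rw [h1, Matrix.one_mul]; simp only [Matrix.mul_assoc]
      _ = U * Matrix.diagonal (fun i => d i * e i) * Uᴴ := by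
          rw [Matrix.diagonal_mul_diagonal]
  rw [key]
  refine congrArg₂ _ (congrArg _ (congrArg _ (funext fun i => ?_))) rfl
  push_cast
  ring

lemma fc_add (f g : ℝ → ℝ) :
    fc hA f + fc hA g = fc hA (fun x => f x + g x) := by
  unfold fc
  rw [← Matrix.add_mul, ← Matrix.mul_add, Matrix.diagonal_add]
  refine congrArg₂ _ (congrArg _ (congrArg _ (funext fun i => ?_))) rfl
  push_cast
  ring

lemma fc_sub (f g : ℝ → ℝ) :
    fc hA f - fc hA g = fc hA (fun x => f x - g x) := by
  unfold fc
  rw [← Matrix.sub_mul, ← Matrix.mul_sub, Matrix.diagonal_sub]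
  refine congrArg₂ _ (congrArg _ (congrArg _ (funext fun i => ?_))) rfl
  push_cast
  ring

lemma fc_id : fc hA (fun x => x) = A := by
  conv_rhs => rw [hA.spectral_theorem]
  rfl

lemma fc_one : fc hA (fun _ => 1) = 1 := by
  unfold fc
  set U := (hA.eigenvectorUnitary : Matrix n n ℂ) with hU
  have h1 : U * Uᴴ = 1 := by
    rw [← Matrix.star_eq_conjTranspose]
    exact Matrix.mem_unitaryGroup_iff.mp hA.eigenvectorUnitary.2
  have h2 : Matrix.diagonal (fun _ : n => (((1 : ℝ) : ℂ))) = 1 := by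
    simp
  rw [h2, Matrix.mul_one, h1]

lemma fc_trace (f : ℝ → ℝ) :
    (fc hA f).trace = ((∑ i, f (hA.eigenvalues i) : ℝ) : ℂ) := by
  unfold fc
  set U := (hA.eigenvectorUnitary : Matrix n n ℂ) with hU
  have h1 : Uᴴ * U = 1 := by
    rw [← Matrix.star_eq_conjTranspose]
    exact Matrix.mem_unitaryGroup_iff'.mp hA.eigenvectorUnitary.2
  rw [Matrix.trace_mul_cycle, h1, Matrix.one_mul, Matrix.trace_diagonal]
  push_cast
  rfl

lemma fc_posSemidef {f : ℝ → ℝ} (hf : ∀ x, 0 ≤ f x) : (fc hA f).PosSemidef := by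
  have hd : Matrix.PosSemidef (Matrix.diagonal (fun i => ((f (hA.eigenvalues i) : ℝ) : ℂ))) := by
    refine Matrix.PosSemidef.diagonal ?_
    intro i
    exact Complex.zero_le_real.mpr (hf _)
  exact hd.mul_mul_conjTranspose_same _

lemma fc_isHermitian (f : ℝ → ℝ) : (fc hA f).IsHermitian := by
  apply Matrix.isHermitian_mul_mul_conjTranspose
  exact Matrix.isHermitian_diagonal_of_self_adjoint _ <|
    funext fun i => star_ofReal' _

lemma fc_eq_zero {f : ℝ → ℝ} (h : ∀ i, f (hA.eigenvalues i) = 0) : fc hA f = 0 := by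
  unfold fc
  rw [show (fun i => ((f (hA.eigenvalues i) : ℝ) : ℂ)) = fun _ => 0 from
    funext fun i => by rw [h i]; norm_num]
  rw [Matrix.diagonal_zero, Matrix.mul_zero, Matrix.zero_mul]

lemma fc_sqrt_mul {P : Matrix n n ℂ} (hP : P.PosSemidef) :
    fc hP.1 Real.sqrt * fc hP.1 Real.sqrt = P := by
  rw [fc_mul]
  conv_rhs => rw [← fc_id hP.1]
  unfold fc
  refine congrArg₂ _ (congrArg _ (congrArg _ (funext fun i => ?_))) rfl
  exact congrArg _ (Real.mul_self_sqrt (hP.eigenvalues_nonneg i))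

open scoped MatrixOrder in
lemma psd_sq_unique {X Y C : Matrix n n ℂ} (hX : X.PosSemidef) (hY : Y.PosSemidef)
    (hXC : X * X = C) (hYC : Y * Y = C) : X = Y := by
  have hC : 0 ≤ C := by
    rw [← hXC]
    have := Matrix.posSemidef_conjTranspose_mul_self X
    rw [hX.1.eq] at this
    exact Matrix.nonneg_iff_posSemidef.mpr this
  rw [← (CFC.sqrt_eq_iff C X hC (Matrix.nonneg_iff_posSemidef.mpr hX)).mpr hXC,
    (CFC.sqrt_eq_iff C Y hC (Matrix.nonneg_iff_posSemidef.mpr hY)).mpr hYC]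

lemma max_add_max_neg (x : ℝ) : max x 0 + max (-x) 0 = |x| := by
  rcases le_total 0 x with h | h
  · rw [max_eq_left h, max_eq_right (neg_nonpos.mpr h), abs_of_nonneg h, add_zero]
  · rw [max_eq_right h, max_eq_left (neg_nonneg.mpr h), abs_of_nonpos h, zero_add]

lemma max_sub_max_neg (x : ℝ) : max x 0 - max (-x) 0 = x :=
  max_zero_sub_max_neg_zero_eq_self x

/-- The trace norm of a Hermitian matrix is the sum of absolute values of eigenvalues. -/
lemma traceNorm_eq_sum_abs : traceNorm A = ∑ i, |hA.eigenvalues i| := by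
  have h1 : (fc hA (fun x => |x|)).PosSemidef := fc_posSemidef hA (fun x => abs_nonneg x)
  have h2 : (fc hA (fun x => |x|)) ^ 2 = Aᴴ * A := by
    rw [pow_two, fc_mul, hA.eq]
    have h3 : (fun x => |x| * |x|) = fun x : ℝ => x * x := by
      funext x; rw [abs_mul_abs_self]
    rw [h3, ← fc_mul, fc_id]
  have h3 : fc hA (fun x => |x|) = fc (Matrix.posSemidef_conjTranspose_mul_self A).1 Real.sqrt :=
    psd_sq_unique h1 (fc_posSemidef _ Real.sqrt_nonneg) (by rw [← pow_two, h2])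
      (fc_sqrt_mul (Matrix.posSemidef_conjTranspose_mul_self A))
  show (fc (Matrix.posSemidef_conjTranspose_mul_self A).1 Real.sqrt).trace.re = _
  rw [← h3, fc_trace]
  exact Complex.ofReal_re _

/-- The trace of a Hermitian matrix is the (real) sum of its eigenvalues. -/
lemma trace_eq_sum_eigenvalues : A.trace = ((∑ i, hA.eigenvalues i : ℝ) : ℂ) := by
  conv_lhs => rw [← fc_id hA]
  exact fc_trace hA _

lemma psd_trace_re_nonneg {C : Matrix n n ℂ} (hC : C.PosSemidef) : 0 ≤ C.trace.re := by
  have h : (0 : ℂ) ≤ C.trace := by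
    rw [Matrix.trace]
    refine Finset.sum_nonneg fun i _ => ?_
    exact hC.diag_nonneg
  exact (Complex.le_def.mp h).1

lemma trace_mul_psd_re_nonneg {P Q : Matrix n n ℂ} (hP : P.PosSemidef) (hQ : Q.PosSemidef) :
    0 ≤ ((P * Q).trace).re := by
  have hS : (fc hP.1 Real.sqrt).IsHermitian := fc_isHermitian hP.1 _
  have h2 : (P * Q).trace = (fc hP.1 Real.sqrt * Q * fc hP.1 Real.sqrt).trace := by
    conv_lhs => rw [← fc_sqrt_mul hP]
    exact (Matrix.trace_mul_cycle (fc hP.1 Real.sqrt) Q (fc hP.1 Real.sqrt)).symm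
  have h3 : (fc hP.1 Real.sqrt * Q * fc hP.1 Real.sqrt).PosSemidef := by
    have := hQ.mul_mul_conjTranspose_same (fc hP.1 Real.sqrt)
    rwa [hS.eq] at this
  rw [h2]
  exact psd_trace_re_nonneg h3

lemma psd_smul_real {C : Matrix n n ℂ} (hC : C.PosSemidef) {r : ℝ} (hr : 0 ≤ r) :
    (((r : ℂ)) • C).PosSemidef := by
  constructor
  · have h := hC.isHermitian
    unfold Matrix.IsHermitian at h ⊢
    rw [Matrix.conjTranspose_smul, h, star_ofReal']
  · intro x
    exact (hC.smul (Complex.zero_le_real.mpr hr)).2 x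

end ProofAux

section ProofAux2

open Matrix

variable {IA IB : Type} [Fintype IA] [Fintype IB]

lemma ptB_ptB (X : BMat IA IB) : ptB (ptB X) = X := rfl

lemma ptB_trace (X : BMat IA IB) : (ptB X).trace = X.trace := rfl

lemma ptB_isHermitian {X : BMat IA IB} (h : X.IsHermitian) : (ptB X).IsHermitian := by
  ext p q
  rw [Matrix.conjTranspose_apply]
  show star (X (q.1, p.2) (p.1, q.2)) = X (p.1, q.2) (q.1, p.2)
  rw [← Matrix.conjTranspose_apply, h.eq]

/-- `ptB` as a linear map. -/
def ptBL : BMat IA IB →ₗ[ℂ] BMat IA IB where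
  toFun := ptB
  map_add' := fun _ _ => rfl
  map_smul' := fun _ _ => rfl

lemma cp_pos {I J : Type} [Fintype I] [Fintype J]
    {f : Matrix I I ℂ → Matrix J J ℂ} (hf : CompletelyPositive f)
    {X : Matrix I I ℂ} (hX : X.PosSemidef) : (f X).PosSemidef := by
  have h1 : (X.submatrix (Prod.snd : Fin 1 × I → I) Prod.snd).PosSemidef := hX.submatrix _
  have h2 := hf 1 _ h1
  have h3 : extMap f 1 (X.submatrix (Prod.snd : Fin 1 × I → I) Prod.snd)
      = (f X).submatrix (Prod.snd : Fin 1 × J → J) Prod.snd := rfl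
  rw [h3] at h2
  have h4 : f X = ((f X).submatrix (Prod.snd : Fin 1 × J → J) Prod.snd).submatrix
      (fun j => ((0 : Fin 1), j)) (fun j => ((0 : Fin 1), j)) := rfl
  rw [h4]
  exact h2.submatrix _

lemma cp_add {I J : Type} [Fintype I] [Fintype J]
    {f g : Matrix I I ℂ → Matrix J J ℂ}
    (hf : CompletelyPositive f) (hg : CompletelyPositive g) :
    CompletelyPositive (fun X => f X + g X) := by
  intro k M hM
  have h : extMap (fun X => f X + g X) k M = extMap f k M + extMap g k M := rfl
  rw [h]
  exact (hf k M hM).add (hg k M hM)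

lemma extMap_sum {I J : Type} [Fintype I] [Fintype J] {ι : Type*} (s : Finset ι)
    (f : ι → Matrix I I ℂ → Matrix J J ℂ) (k : ℕ) (M : Matrix (Fin k × I) (Fin k × I) ℂ) :
    extMap (fun X => ∑ i ∈ s, f i X) k M = ∑ i ∈ s, extMap (f i) k M := by
  ext p q
  simp [extMap, Matrix.sum_apply]

lemma extMap_kraus {I J : Type} [Fintype I] [Fintype J] [DecidableEq I] [DecidableEq J]
    (K : Matrix J I ℂ) (k : ℕ) (M : Matrix (Fin k × I) (Fin k × I) ℂ) :
    extMap (fun X => K * X * Kᴴ) k M =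
      (Matrix.of fun (p : Fin k × J) (q : Fin k × I) =>
          if p.1 = q.1 then K p.2 q.2 else 0) * M *
      (Matrix.of fun (p : Fin k × J) (q : Fin k × I) =>
          if p.1 = q.1 then K p.2 q.2 else 0)ᴴ := by
  ext p q
  show (K * (show Matrix I I ℂ from fun i i' => M (p.1, i) (q.1, i')) * Kᴴ) p.2 q.2 = _
  simp only [Matrix.mul_apply, Matrix.conjTranspose_apply, Matrix.of_apply,
    Fintype.sum_prod_type, apply_ite (star : ℂ → ℂ), star_zero, ite_mul, mul_ite,
    zero_mul, mul_zero, Finset.sum_const_zero, Finset.sum_ite_eq, Finset.sum_ite_eq',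
    Finset.mem_univ, if_true]
  have collapse : ∀ {α : Type} [Fintype α] (g : Fin k → α → ℂ) (b : Fin k),
      (∑ x : Fin k, ∑ y : α, if b = x then g x y else 0) = ∑ y, g b y := by
    intro α _ g b
    rw [Finset.sum_comm]
    simp
  simp only [collapse]
  rfl

lemma cp_traceSmul {I J : Type} [Fintype I] [Fintype J] [DecidableEq I] [DecidableEq J]
    {P : Matrix I I ℂ} {ω : Matrix J J ℂ} (hP : P.PosSemidef) (hω : ω.PosSemidef) :
    CompletelyPositive (fun X => (P * X).trace • ω) := by
  set S := fc hP.1 Real.sqrt with hSdef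
  set T := fc hω.1 Real.sqrt with hTdef
  have hS : Sᴴ = S := fc_isHermitian hP.1 _
  have hT : Tᴴ = T := fc_isHermitian hω.1 _
  have hSst : ∀ p q, star (S p q) = S q p := by
    intro p q
    conv_rhs => rw [← hS, Matrix.conjTranspose_apply]
  have hTst : ∀ p q, star (T p q) = T q p := by
    intro p q
    conv_rhs => rw [← hT, Matrix.conjTranspose_apply]
  set K : I × J → Matrix J I ℂ := fun mn => Matrix.of fun q r => T q mn.2 * S mn.1 r with hK
  have key : (fun X : Matrix I I ℂ => (P * X).trace • ω)
      = fun X => ∑ mn : I × J, K mn * X * (K mn)ᴴ := by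
    funext X
    ext j j'
    have hωe : ω j j' = ∑ m : J, T j m * T m j' := by
      conv_lhs => rw [← fc_sqrt_mul hω]
      rw [Matrix.mul_apply]
    have hPXe : (P * X).trace = ∑ m : I, (S * X * S) m m := by
      conv_lhs => rw [← fc_sqrt_mul hP]
      rw [← Matrix.trace_mul_cycle]
      rfl
    rw [Matrix.sum_apply, Matrix.smul_apply, smul_eq_mul, hωe, hPXe, Finset.sum_mul_sum]
    conv_rhs => rw [Fintype.sum_prod_type]
    refine Finset.sum_congr rfl fun m _ => ?_
    refine Finset.sum_congr rfl fun nn _ => ?_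
    simp only [Matrix.mul_apply, Matrix.conjTranspose_apply, hK, Matrix.of_apply,
      star_mul', hTst, hSst]
    simp only [Finset.sum_mul]
    refine Finset.sum_congr rfl fun i' _ => ?_
    refine Finset.sum_congr rfl fun i _ => ?_
    ring
  rw [key]
  intro k M hM
  rw [extMap_sum]
  refine Finset.sum_induction _ _ (fun a b ha hb => ha.add hb) Matrix.PosSemidef.zero
    fun mn _ => ?_
  rw [extMap_kraus]
  exact hM.mul_mul_conjTranspose_same _

end ProofAux2

/-- For bipartite quasi-states `ρ`, `σ`, there exists a PPTq
operation `N` with `N ρ = σ` iff `E_N(ρ) ≥ E_N(σ)`. -/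
theorem quasiState_transform_iff_EN {dA dB dA' dB' : ℕ}
    (ρ : BMat (Fin dA) (Fin dB)) (σ : BMat (Fin dA') (Fin dB'))
    (hρ : IsQuasiState ρ) (hσ : IsQuasiState σ) :
    (∃ N : BMat (Fin dA) (Fin dB) →ₗ[ℂ] BMat (Fin dA') (Fin dB'),
        IsPPTq N ∧ N ρ = σ) ↔ EN σ ≤ EN ρ := by
  classical
  obtain ⟨hρH, hρT⟩ := hρ
  obtain ⟨hσH, hσT⟩ := hσ
  have hA : (ptB ρ).IsHermitian := ptB_isHermitian hρH
  have hB : (ptB σ).IsHermitian := ptB_isHermitian hσH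
  have hAtr : (ptB ρ).trace = 1 := by rw [ptB_trace, hρT]
  have hBtr : (ptB σ).trace = 1 := by rw [ptB_trace, hσT]
  have hAev : (∑ i, hA.eigenvalues i) = 1 := by
    have h := trace_eq_sum_eigenvalues hA
    rw [hAtr] at h
    exact_mod_cast h.symm
  have hBev : (∑ i, hB.eigenvalues i) = 1 := by
    have h := trace_eq_sum_eigenvalues hB
    rw [hBtr] at h
    exact_mod_cast h.symm
  set ra := ∑ i, max (hA.eigenvalues i) 0 with haA
  set rb := ∑ i, max (-hA.eigenvalues i) 0 with hbA
  set rc := ∑ i, max (hB.eigenvalues i) 0 with hcB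
  set rd := ∑ i, max (-hB.eigenvalues i) 0 with hdB
  have hTA : traceNorm (ptB ρ) = ra + rb := by
    rw [traceNorm_eq_sum_abs hA, haA, hbA, ← Finset.sum_add_distrib]
    exact Finset.sum_congr rfl fun i _ => (max_add_max_neg _).symm
  have hTB : traceNorm (ptB σ) = rc + rd := by
    rw [traceNorm_eq_sum_abs hB, hcB, hdB, ← Finset.sum_add_distrib]
    exact Finset.sum_congr rfl fun i _ => (max_add_max_neg _).symm
  have habA : ra - rb = 1 := by
    rw [haA, hbA, ← Finset.sum_sub_distrib]
    rw [Finset.sum_congr rfl fun i (_ : i ∈ Finset.univ) => max_sub_max_neg (hA.eigenvalues i)]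
    exact hAev
  have hcdB : rc - rd = 1 := by
    rw [hcB, hdB, ← Finset.sum_sub_distrib]
    rw [Finset.sum_congr rfl fun i (_ : i ∈ Finset.univ) => max_sub_max_neg (hB.eigenvalues i)]
    exact hBev
  have hbA0 : 0 ≤ rb := Finset.sum_nonneg fun i _ => le_max_right _ _
  have hdB0 : 0 ≤ rd := Finset.sum_nonneg fun i _ => le_max_right _ _
  have haA1 : 1 ≤ ra := by linarith
  have hcB1 : 1 ≤ rc := by linarith
  have ind_mul : ∀ x : ℝ, (if 0 ≤ x then (1 : ℝ) else 0) * x = max x 0 := by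
    intro x
    by_cases h : 0 ≤ x
    · rw [if_pos h, one_mul, max_eq_left h]
    · rw [if_neg h, zero_mul, max_eq_right (le_of_lt (lt_of_not_ge h))]
  have ind_nonneg : ∀ x : ℝ, 0 ≤ (if 0 ≤ x then (1 : ℝ) else 0) := by
    intro x; split <;> norm_num
  have one_sub_ind_mul : ∀ x : ℝ, (1 - (if 0 ≤ x then (1 : ℝ) else 0)) * x = -(max (-x) 0) := by
    intro x
    rw [sub_mul, one_mul, ind_mul]
    linear_combination (-1 : ℝ) * max_sub_max_neg x
  have one_sub_ind_nonneg : ∀ x : ℝ, 0 ≤ 1 - (if 0 ≤ x then (1 : ℝ) else 0) := by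
    intro x; split <;> norm_num
  constructor
  · -- forward direction
    rintro ⟨N, ⟨hNH, hNT, hNCP⟩, hNρ⟩
    set Mf : BMat (Fin dA) (Fin dB) → BMat (Fin dA') (Fin dB') :=
      fun X => ptB (N (ptB X)) with hMfdef
    have hMftr : ∀ X, (Mf X).trace = X.trace := by
      intro X
      show (ptB (N (ptB X))).trace = X.trace
      rw [ptB_trace, hNT, ptB_trace]
    have hMfsub : ∀ X Y, Mf (X - Y) = Mf X - Mf Y := by
      intro X Y
      show ptB (N (ptB (X - Y))) = ptB (N (ptB X)) - ptB (N (ptB Y))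
      rw [show ptB (X - Y) = ptB X - ptB Y from rfl, map_sub]
      rfl
    have hMfA : Mf (ptB ρ) = ptB σ := by
      show ptB (N (ptB (ptB ρ))) = ptB σ
      rw [ptB_ptB, hNρ]
    set Ap := fc hA (fun x => max x 0) with hApdef
    set Am := fc hA (fun x => max (-x) 0) with hAmdef
    have hApm : ptB ρ = Ap - Am := by
      rw [hApdef, hAmdef, fc_sub]
      rw [show (fun x : ℝ => max x 0 - max (-x) 0) = fun x : ℝ => x from funext max_sub_max_neg]
      rw [fc_id]
    have hBdec : ptB σ = Mf Ap - Mf Am := by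
      rw [← hMfA, hApm, hMfsub]
    have hMApPsd : (Mf Ap).PosSemidef :=
      cp_pos hNCP (fc_posSemidef hA fun x => le_max_right _ _)
    have hMAmPsd : (Mf Am).PosSemidef :=
      cp_pos hNCP (fc_posSemidef hA fun x => le_max_right _ _)
    have hMAptr : (Mf Ap).trace = ((ra : ℝ) : ℂ) := by rw [hMftr, hApdef, fc_trace, haA]
    have hMAmtr : (Mf Am).trace = ((rb : ℝ) : ℂ) := by rw [hMftr, hAmdef, fc_trace, hbA]
    set R := fc hB (fun x => if 0 ≤ x then 1 else 0) with hRdef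
    have hRpsd : R.PosSemidef := fc_posSemidef hB ind_nonneg
    have h1R : (1 : BMat (Fin dA') (Fin dB')) - R = fc hB (fun x => 1 - (if 0 ≤ x then 1 else 0)) := by
      rw [← fc_sub, fc_one, hRdef]
    have h1Rpsd : ((1 : BMat (Fin dA') (Fin dB')) - R).PosSemidef := by
      rw [h1R]; exact fc_posSemidef hB one_sub_ind_nonneg
    -- trace of R * ptB σ
    have hRB : (R * ptB σ).trace = ((rc : ℝ) : ℂ) := by
      have h0 : (fc hB (fun x => if 0 ≤ x then 1 else 0) * fc hB (fun x => x)).trace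
          = ((rc : ℝ) : ℂ) := by
        rw [fc_mul, fc_trace, hcB]
        exact Complex.ofReal_inj.mpr (Finset.sum_congr rfl fun i _ => ind_mul _)
      rw [fc_id hB] at h0
      rw [hRdef]
      exact h0
    have h1RB : (((1 : BMat (Fin dA') (Fin dB')) - R) * ptB σ).trace = ((-rd : ℝ) : ℂ) := by
      have h0 : (fc hB (fun x => 1 - (if 0 ≤ x then 1 else 0)) * fc hB (fun x => x)).trace
          = ((-rd : ℝ) : ℂ) := by
        rw [fc_mul, fc_trace, hdB]
        refine Complex.ofReal_inj.mpr ?_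
        rw [← Finset.sum_neg_distrib]
        exact Finset.sum_congr rfl fun i _ => one_sub_ind_mul _
      rw [fc_id hB] at h0
      rw [h1R]
      exact h0
    -- inequalities
    have e1 : ((((1 : BMat (Fin dA') (Fin dB')) - R)) * Mf Ap).trace
        = (Mf Ap).trace - (R * Mf Ap).trace := by
      rw [Matrix.sub_mul, Matrix.one_mul, Matrix.trace_sub]
    have e2 : ((((1 : BMat (Fin dA') (Fin dB')) - R)) * Mf Am).trace
        = (Mf Am).trace - (R * Mf Am).trace := by
      rw [Matrix.sub_mul, Matrix.one_mul, Matrix.trace_sub]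
    have f1 : 0 ≤ ((((1 : BMat (Fin dA') (Fin dB')) - R)) * Mf Ap).trace.re :=
      trace_mul_psd_re_nonneg h1Rpsd hMApPsd
    have f2 : 0 ≤ (R * Mf Am).trace.re := trace_mul_psd_re_nonneg hRpsd hMAmPsd
    have f3 : 0 ≤ (R * Mf Ap).trace.re := trace_mul_psd_re_nonneg hRpsd hMApPsd
    have f4 : 0 ≤ ((((1 : BMat (Fin dA') (Fin dB')) - R)) * Mf Am).trace.re :=
      trace_mul_psd_re_nonneg h1Rpsd hMAmPsd
    have g1 : (R * ptB σ).trace = (R * Mf Ap).trace - (R * Mf Am).trace := by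
      rw [hBdec, Matrix.mul_sub, Matrix.trace_sub]
    have g2 : (((1 : BMat (Fin dA') (Fin dB')) - R) * ptB σ).trace
        = (((1 : BMat (Fin dA') (Fin dB')) - R) * Mf Ap).trace
          - (((1 : BMat (Fin dA') (Fin dB')) - R) * Mf Am).trace := by
      rw [hBdec, Matrix.mul_sub, Matrix.trace_sub]
    have hcB_le : rc ≤ ra := by
      have h1 : ((rc : ℝ) : ℂ).re = ((R * Mf Ap).trace - (R * Mf Am).trace).re := by
        rw [← g1, hRB]
      rw [Complex.ofReal_re, Complex.sub_re] at h1
      have h2 : (((1 : BMat (Fin dA') (Fin dB')) - R) * Mf Ap).trace.re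
          = (Mf Ap).trace.re - (R * Mf Ap).trace.re := by
        rw [e1, Complex.sub_re]
      rw [hMAptr, Complex.ofReal_re] at h2
      linarith
    have hdB_le : rd ≤ rb := by
      have h1 : ((-rd : ℝ) : ℂ).re
          = ((((1 : BMat (Fin dA') (Fin dB')) - R) * Mf Ap).trace
            - (((1 : BMat (Fin dA') (Fin dB')) - R) * Mf Am).trace).re := by
        rw [← g2, h1RB]
      rw [Complex.ofReal_re, Complex.sub_re] at h1
      have h2 : (((1 : BMat (Fin dA') (Fin dB')) - R) * Mf Am).trace.re
          = (Mf Am).trace.re - (R * Mf Am).trace.re := by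
        rw [e2, Complex.sub_re]
      rw [hMAmtr, Complex.ofReal_re] at h2
      linarith
    show Real.logb 2 (traceNorm (ptB σ)) ≤ Real.logb 2 (traceNorm (ptB ρ))
    rw [hTA, hTB]
    exact Real.logb_le_logb_of_le (by norm_num) (by linarith) (by linarith)
  · -- converse direction
    intro hEN
    have hEN' : Real.logb 2 (traceNorm (ptB σ)) ≤ Real.logb 2 (traceNorm (ptB ρ)) := hEN
    rw [hTA, hTB] at hEN'
    have hle : rc + rd ≤ ra + rb :=
      (Real.logb_le_logb (by norm_num) (by linarith) (by linarith)).mp hEN'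
    have hdB_le : rd ≤ rb := by linarith
    have hcB_le : rc ≤ ra := by linarith
    have haA0 : ra ≠ 0 := by linarith
    -- the maximally mixed state τ
    have hne : Nonempty (Fin dA' × Fin dB') := by
      by_contra h
      rw [not_nonempty_iff] at h
      have h0 : σ.trace = 0 := by
        rw [Matrix.trace, Finset.univ_eq_empty, Finset.sum_empty]
      rw [hσT] at h0
      exact one_ne_zero h0
    have hcard : 0 < (Fintype.card (Fin dA' × Fin dB') : ℝ) := by
      have := Fintype.card_pos (α := Fin dA' × Fin dB')
      exact_mod_cast this
    set τ : BMat (Fin dA') (Fin dB') :=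
      (((Fintype.card (Fin dA' × Fin dB') : ℝ)⁻¹ : ℝ) : ℂ) • (1 : BMat (Fin dA') (Fin dB'))
      with hτdef
    have hτpsd : τ.PosSemidef := psd_smul_real Matrix.PosSemidef.one (by positivity)
    have hτtr : τ.trace = 1 := by
      rw [hτdef, Matrix.trace_smul, Matrix.trace_one, smul_eq_mul]
      rw [show ((Fintype.card (Fin dA' × Fin dB') : ℕ) : ℂ)
          = (((Fintype.card (Fin dA' × Fin dB') : ℝ)) : ℂ) by push_cast; ring]
      rw [← Complex.ofReal_mul, inv_mul_cancel₀ (ne_of_gt hcard), Complex.ofReal_one]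
    set posB := fc hB (fun x => max x 0) with hposBdef
    set negB := fc hB (fun x => max (-x) 0) with hnegBdef
    have hposBpsd : posB.PosSemidef := fc_posSemidef hB fun x => le_max_right _ _
    have hnegBpsd : negB.PosSemidef := fc_posSemidef hB fun x => le_max_right _ _
    have hposBtr : posB.trace = ((rc : ℝ) : ℂ) := by rw [hposBdef, fc_trace, hcB]
    have hnegBtr : negB.trace = ((rd : ℝ) : ℂ) := by rw [hnegBdef, fc_trace, hdB]
    have hBpm : ptB σ = posB - negB := by
      rw [hposBdef, hnegBdef, fc_sub]
      rw [show (fun x : ℝ => max x 0 - max (-x) 0) = fun x : ℝ => x from funext max_sub_max_neg]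
      rw [fc_id]
    set ω₁ : BMat (Fin dA') (Fin dB') :=
      ((ra⁻¹ : ℝ) : ℂ) • (posB + (((ra - rc : ℝ)) : ℂ) • τ) with hω₁def
    set ω₂ : BMat (Fin dA') (Fin dB') :=
      if rb = 0 then τ else ((rb⁻¹ : ℝ) : ℂ) • (negB + (((rb - rd : ℝ)) : ℂ) • τ) with hω₂def
    have hω₁psd : ω₁.PosSemidef := by
      rw [hω₁def]
      exact psd_smul_real (hposBpsd.add (psd_smul_real hτpsd (by linarith)))
        (by positivity)
    have hω₂psd : ω₂.PosSemidef := by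
      rw [hω₂def]
      split
      · exact hτpsd
      · exact psd_smul_real (hnegBpsd.add (psd_smul_real hτpsd (by linarith)))
          (by positivity)
    have hω₁tr : ω₁.trace = 1 := by
      rw [hω₁def, Matrix.trace_smul, Matrix.trace_add, Matrix.trace_smul, hposBtr, hτtr,
        smul_eq_mul, smul_eq_mul, mul_one, ← Complex.ofReal_add, ← Complex.ofReal_mul]
      rw [show ra⁻¹ * (rc + (ra - rc)) = 1 by field_simp; ring]
      exact Complex.ofReal_one
    have hω₂tr : ω₂.trace = 1 := by
      rw [hω₂def]
      split
      · exact hτtr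
      · next hb0 =>
        rw [Matrix.trace_smul, Matrix.trace_add, Matrix.trace_smul, hnegBtr, hτtr,
          smul_eq_mul, smul_eq_mul, mul_one, ← Complex.ofReal_add, ← Complex.ofReal_mul]
        rw [show rb⁻¹ * (rd + (rb - rd)) = 1 by field_simp; ring]
        exact Complex.ofReal_one
    set P := fc hA (fun x => if 0 ≤ x then 1 else 0) with hPdef
    have hPpsd : P.PosSemidef := fc_posSemidef hA ind_nonneg
    have h1P : (1 : BMat (Fin dA) (Fin dB)) - P = fc hA (fun x => 1 - (if 0 ≤ x then 1 else 0)) := by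
      rw [← fc_sub, fc_one, hPdef]
    have h1Ppsd : ((1 : BMat (Fin dA) (Fin dB)) - P).PosSemidef := by
      rw [h1P]; exact fc_posSemidef hA one_sub_ind_nonneg
    set Mmap : BMat (Fin dA) (Fin dB) →ₗ[ℂ] BMat (Fin dA') (Fin dB') :=
      { toFun := fun X => (P * X).trace • ω₁ + (((1 : BMat (Fin dA) (Fin dB)) - P) * X).trace • ω₂
        map_add' := fun X Y => by
          simp only [Matrix.mul_add, Matrix.trace_add, add_smul]
          abel
        map_smul' := fun c X => by
          simp only [Matrix.mul_smul, Matrix.trace_smul, smul_eq_mul, mul_smul, smul_add,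
            RingHom.id_apply] } with hMmapdef
    have hMapp : ∀ X, Mmap X
        = (P * X).trace • ω₁ + (((1 : BMat (Fin dA) (Fin dB)) - P) * X).trace • ω₂ := fun X => rfl
    refine ⟨ptBL ∘ₗ Mmap ∘ₗ ptBL, ⟨?_, ?_, ?_⟩, ?_⟩
    · -- Hermitian preserving
      intro X hX
      show (ptB (Mmap (ptB X))).IsHermitian
      apply ptB_isHermitian
      rw [hMapp]
      have hY : (ptB X).IsHermitian := ptB_isHermitian hX
      have herm_smul : ∀ (P' : BMat (Fin dA) (Fin dB)) (ω' : BMat (Fin dA') (Fin dB')),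
          P'.IsHermitian → ω'.IsHermitian → ((P' * ptB X).trace • ω').IsHermitian := by
        intro P' ω' hP' hω'
        have hst : star ((P' * ptB X).trace) = (P' * ptB X).trace := by
          rw [← Matrix.trace_conjTranspose, Matrix.conjTranspose_mul, hP'.eq, hY.eq,
            Matrix.trace_mul_comm]
        unfold Matrix.IsHermitian
        rw [Matrix.conjTranspose_smul, hst, hω'.eq]
      refine Matrix.IsHermitian.add ?_ ?_
      · exact herm_smul P ω₁ (by rw [hPdef]; exact fc_isHermitian hA _) hω₁psd.isHermitian
      · exact herm_smul _ ω₂ (by rw [h1P]; exact fc_isHermitian hA _) hω₂psd.isHermitian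
    · -- trace preserving
      intro X
      show (ptB (Mmap (ptB X))).trace = X.trace
      rw [ptB_trace, hMapp, Matrix.trace_add, Matrix.trace_smul, hω₁tr,
        Matrix.trace_smul, hω₂tr, smul_eq_mul, smul_eq_mul, mul_one, mul_one,
        ← Matrix.trace_add, ← Matrix.add_mul]
      rw [show P + ((1 : BMat (Fin dA) (Fin dB)) - P) = 1 from by abel, Matrix.one_mul,
        ptB_trace]
    · -- complete positivity of T∘N∘T
      have hfun : (fun X : BMat (Fin dA) (Fin dB) =>
          ptB ((ptBL ∘ₗ Mmap ∘ₗ ptBL) (ptB X)))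
          = fun X => (P * X).trace • ω₁ + (((1 : BMat (Fin dA) (Fin dB)) - P) * X).trace • ω₂ := by
        funext X
        show ptB (ptB (Mmap (ptB (ptB X)))) = _
        rw [ptB_ptB, ptB_ptB, hMapp]
      rw [hfun]
      exact cp_add (cp_traceSmul hPpsd hω₁psd) (cp_traceSmul h1Ppsd hω₂psd)
    · -- maps ρ to σ
      show ptB (Mmap (ptB ρ)) = σ
      have hPA : (P * ptB ρ).trace = ((ra : ℝ) : ℂ) := by
        have h0 : (fc hA (fun x => if 0 ≤ x then 1 else 0) * fc hA (fun x => x)).trace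
            = ((ra : ℝ) : ℂ) := by
          rw [fc_mul, fc_trace, haA]
          exact Complex.ofReal_inj.mpr (Finset.sum_congr rfl fun i _ => ind_mul _)
        rw [fc_id hA] at h0
        rw [hPdef]
        exact h0
      have hQA : (((1 : BMat (Fin dA) (Fin dB)) - P) * ptB ρ).trace = ((-rb : ℝ) : ℂ) := by
        have h0 : (fc hA (fun x => 1 - (if 0 ≤ x then 1 else 0)) * fc hA (fun x => x)).trace
            = ((-rb : ℝ) : ℂ) := by
          rw [fc_mul, fc_trace, hbA]
          refine Complex.ofReal_inj.mpr ?_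
          rw [← Finset.sum_neg_distrib]
          exact Finset.sum_congr rfl fun i _ => one_sub_ind_mul _
        rw [fc_id hA] at h0
        rw [h1P]
        exact h0
      rw [hMapp, hPA, hQA]
      have e1 : ((ra : ℝ) : ℂ) • ω₁ = posB + (((ra - rc : ℝ)) : ℂ) • τ := by
        rw [hω₁def, smul_smul, ← Complex.ofReal_mul, mul_inv_cancel₀ haA0,
          Complex.ofReal_one, one_smul]
      by_cases hb0 : rb = 0
      · have hd0 : rd = 0 := by linarith
        have hac : ra - rc = 0 := by linarith
        have hnegB0 : negB = 0 := by
          rw [hnegBdef]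
          apply fc_eq_zero
          have hsum : ∑ i, max (-hB.eigenvalues i) 0 = 0 := by rw [← hdB]; exact hd0
          exact fun i => (Finset.sum_eq_zero_iff_of_nonneg
            (fun i _ => le_max_right (-hB.eigenvalues i) 0)).mp hsum i (Finset.mem_univ i)
        have hposBσ : posB = ptB σ := by rw [hBpm, hnegB0, sub_zero]
        rw [hb0, e1, hac]
        rw [show ((-(0 : ℝ) : ℝ) : ℂ) = 0 by norm_num, zero_smul, add_zero]
        rw [show (((0 : ℝ)) : ℂ) = 0 by norm_num, zero_smul, add_zero]
        rw [hposBσ, ptB_ptB]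
      · have e2 : ((-rb : ℝ) : ℂ) • ω₂ = -(negB + (((rb - rd : ℝ)) : ℂ) • τ) := by
          rw [hω₂def, if_neg hb0, smul_smul, ← Complex.ofReal_mul, neg_mul,
            mul_inv_cancel₀ hb0, Complex.ofReal_neg, Complex.ofReal_one, neg_smul, one_smul]
        have hacbd : ra - rc = rb - rd := by linarith
        rw [e1, e2, hacbd]
        rw [show posB + (((rb - rd : ℝ)) : ℂ) • τ + -(negB + (((rb - rd : ℝ)) : ℂ) • τ)
            = posB - negB from by abel]
        rw [← hBpm, ptB_ptB]

end
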